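/- Let d ≥ 5 be an integer and k ≥ 2 a real number, and let B be the (d+1) × (d+1) real matrix with rows and columns indexed by 0,…,d defined by: B(0,0) = 0, B(0,1) = 1; B(1,0) = k, B(1,1) = (3k−6)/4, B(1,2) = (k+2)/4; for 2 ≤ i ≤ d−1: B(i,i−1) = (k+2)/4, B(i,i) = (k−2)/2, B(i,i+1) = (k+2)/4; B(d,d−1) = (k+2)/4, B(d,d) = (3k−2)/4; and all other entries 0. Then every eigenvalue λ of B is real and satisfies −2 ≤ λ ≤ k; equivalently, |λ − (k−2)/2| ≤ (k+2)/2. -/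

import Mathlib

open Polynomial Finset
open scoped ComplexConjugate

/-- The first intersection matrix of a homogeneous monotonic P-polynomial table
algebra of dimension `d + 1` with valency `k` and `α = (3k − 6)/4`. -/
noncomputable def firstIntersectionMatrix (d : ℕ) (k : ℝ) :
    Matrix (Fin (d + 1)) (Fin (d + 1)) ℝ :=
  Matrix.of fun i j : Fin (d + 1) =>
    if (i : ℕ) = 0 then (if (j : ℕ) = 1 then 1 else 0)
    else if (i : ℕ) = 1 then
      (if (j : ℕ) = 0 then k
       else if (j : ℕ) = 1 then (3 * k - 6) / 4
       else if (j : ℕ) = 2 then (k + 2) / 4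
       else 0)
    else if (i : ℕ) = d then
      (if (j : ℕ) = d - 1 then (k + 2) / 4
       else if (j : ℕ) = d then (3 * k - 2) / 4
       else 0)
    else
      (if (j : ℕ) + 1 = (i : ℕ) then (k + 2) / 4
       else if (j : ℕ) = (i : ℕ) then (k - 2) / 2
       else if (j : ℕ) = (i : ℕ) + 1 then (k + 2) / 4
       else 0)


lemma keyI (k : ℝ) : ∀ (e : ℕ) (a : ℕ → ℂ),
    (k:ℂ) * ((k:ℂ) * (conj (a 0) * a 0) + ∑ t ∈ range (e + 5), conj (a (t+1)) * a (t+1))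
      - ((k:ℂ) * conj (a 0) * a 1
         + conj (a 1) * ((k:ℂ) * a 0 + (3*(k:ℂ)-6)/4 * a 1 + ((k:ℂ)+2)/4 * a 2)
         + ∑ t ∈ range (e + 3), conj (a (t+2)) *
             (((k:ℂ)+2)/4 * a (t+1) + ((k:ℂ)-2)/2 * a (t+2) + ((k:ℂ)+2)/4 * a (t+3))
         + conj (a (e+5)) * (((k:ℂ)+2)/4 * a (e+4) + (3*(k:ℂ)-2)/4 * a (e+5)))
    = conj ((k:ℂ) * a 0 - a 1) * ((k:ℂ) * a 0 - a 1)
      + ((k:ℂ)+2)/4 * ∑ t ∈ range (e + 4), conj (a (t+1) - a (t+2)) * (a (t+1) - a (t+2)) := by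
  intro e
  induction e with
  | zero =>
    intro a
    simp only [show (0:ℕ)+5 = 5 from rfl, show (0:ℕ)+3 = 3 from rfl, show (0:ℕ)+4 = 4 from rfl,
      Finset.sum_range_succ, Finset.sum_range_zero, map_sub, map_add, map_mul,
      Complex.conj_ofReal]
    ring
  | succ e ih =>
    intro a
    have hA : ∑ t ∈ range (e+1+5), conj (a (t+1)) * a (t+1)
        = (∑ t ∈ range (e+5), conj (a (t+1)) * a (t+1)) + conj (a (e+6)) * a (e+6) := by
      rw [show e+1+5 = (e+5)+1 by omega, Finset.sum_range_succ, show e+5+1 = e+6 by omega]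
    have hB : ∑ t ∈ range (e+1+3), conj (a (t+2)) *
             (((k:ℂ)+2)/4 * a (t+1) + ((k:ℂ)-2)/2 * a (t+2) + ((k:ℂ)+2)/4 * a (t+3))
        = (∑ t ∈ range (e+3), conj (a (t+2)) *
             (((k:ℂ)+2)/4 * a (t+1) + ((k:ℂ)-2)/2 * a (t+2) + ((k:ℂ)+2)/4 * a (t+3)))
          + conj (a (e+5)) *
             (((k:ℂ)+2)/4 * a (e+4) + ((k:ℂ)-2)/2 * a (e+5) + ((k:ℂ)+2)/4 * a (e+6)) := by
      rw [show e+1+3 = (e+3)+1 by omega, Finset.sum_range_succ, show e+3+1 = e+4 by omega,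
        show e+3+2 = e+5 by omega, show e+3+3 = e+6 by omega]
    have hC : ∑ t ∈ range (e+1+4), conj (a (t+1) - a (t+2)) * (a (t+1) - a (t+2))
        = (∑ t ∈ range (e+4), conj (a (t+1) - a (t+2)) * (a (t+1) - a (t+2)))
          + conj (a (e+5) - a (e+6)) * (a (e+5) - a (e+6)) := by
      rw [show e+1+4 = (e+4)+1 by omega, Finset.sum_range_succ, show e+4+1 = e+5 by omega,
        show e+4+2 = e+6 by omega]
    rw [hA, hB, hC, show e+1+5 = e+6 by omega, show e+1+4 = e+5 by omega]
    have h := ih a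
    simp only [map_sub, map_add, map_mul, Complex.conj_ofReal] at h ⊢
    linear_combination h

lemma keyII (k : ℝ) : ∀ (e : ℕ) (a : ℕ → ℂ),
    ((k:ℂ) * conj (a 0) * a 1
         + conj (a 1) * ((k:ℂ) * a 0 + (3*(k:ℂ)-6)/4 * a 1 + ((k:ℂ)+2)/4 * a 2)
         + ∑ t ∈ range (e + 3), conj (a (t+2)) *
             (((k:ℂ)+2)/4 * a (t+1) + ((k:ℂ)-2)/2 * a (t+2) + ((k:ℂ)+2)/4 * a (t+3))
         + conj (a (e+5)) * (((k:ℂ)+2)/4 * a (e+4) + (3*(k:ℂ)-2)/4 * a (e+5)))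
      + 2 * ((k:ℂ) * (conj (a 0) * a 0) + ∑ t ∈ range (e + 5), conj (a (t+1)) * a (t+1))
    = 2 * (k:ℂ) * (conj (a 0 + a 1 / 2) * (a 0 + a 1 / 2))
      + ((k:ℂ)+2)/4 * ∑ t ∈ range (e + 4), conj (a (t+1) + a (t+2)) * (a (t+1) + a (t+2))
      + ((k:ℂ)+2)/2 * (conj (a (e+5)) * a (e+5)) := by
  intro e
  induction e with
  | zero =>
    intro a
    simp only [show (0:ℕ)+5 = 5 from rfl, show (0:ℕ)+3 = 3 from rfl, show (0:ℕ)+4 = 4 from rfl,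
      Finset.sum_range_succ, Finset.sum_range_zero, map_sub, map_add, map_mul, map_div₀,
      map_ofNat, Complex.conj_ofReal]
    ring
  | succ e ih =>
    intro a
    have hA : ∑ t ∈ range (e+1+5), conj (a (t+1)) * a (t+1)
        = (∑ t ∈ range (e+5), conj (a (t+1)) * a (t+1)) + conj (a (e+6)) * a (e+6) := by
      rw [show e+1+5 = (e+5)+1 by omega, Finset.sum_range_succ, show e+5+1 = e+6 by omega]
    have hB : ∑ t ∈ range (e+1+3), conj (a (t+2)) *
             (((k:ℂ)+2)/4 * a (t+1) + ((k:ℂ)-2)/2 * a (t+2) + ((k:ℂ)+2)/4 * a (t+3))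
        = (∑ t ∈ range (e+3), conj (a (t+2)) *
             (((k:ℂ)+2)/4 * a (t+1) + ((k:ℂ)-2)/2 * a (t+2) + ((k:ℂ)+2)/4 * a (t+3)))
          + conj (a (e+5)) *
             (((k:ℂ)+2)/4 * a (e+4) + ((k:ℂ)-2)/2 * a (e+5) + ((k:ℂ)+2)/4 * a (e+6)) := by
      rw [show e+1+3 = (e+3)+1 by omega, Finset.sum_range_succ, show e+3+1 = e+4 by omega,
        show e+3+2 = e+5 by omega, show e+3+3 = e+6 by omega]
    have hC : ∑ t ∈ range (e+1+4), conj (a (t+1) + a (t+2)) * (a (t+1) + a (t+2))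
        = (∑ t ∈ range (e+4), conj (a (t+1) + a (t+2)) * (a (t+1) + a (t+2)))
          + conj (a (e+5) + a (e+6)) * (a (e+5) + a (e+6)) := by
      rw [show e+1+4 = (e+4)+1 by omega, Finset.sum_range_succ, show e+4+1 = e+5 by omega,
        show e+4+2 = e+6 by omega]
    rw [hA, hB, hC, show e+1+5 = e+6 by omega, show e+1+4 = e+5 by omega]
    have h := ih a
    simp only [map_sub, map_add, map_mul, map_div₀, map_ofNat, Complex.conj_ofReal] at h ⊢
    linear_combination h



/-- nat-indexed entry function -/
noncomputable def entryFun (d : ℕ) (k : ℝ) (i j : ℕ) : ℝ :=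
  if i = 0 then (if j = 1 then 1 else 0)
  else if i = 1 then
    (if j = 0 then k
     else if j = 1 then (3 * k - 6) / 4
     else if j = 2 then (k + 2) / 4
     else 0)
  else if i = d then
    (if j = d - 1 then (k + 2) / 4
     else if j = d then (3 * k - 2) / 4
     else 0)
  else
    (if j + 1 = i then (k + 2) / 4
     else if j = i then (k - 2) / 2
     else if j = i + 1 then (k + 2) / 4
     else 0)


set_option maxHeartbeats 1600000 in
/-- Every eigenvalue of the first intersection matrix is real and lies in the
interval `[-2, k]`, i.e. satisfies `|λ − (k−2)/2| ≤ (k+2)/2`. -/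
theorem eigenvalues_firstIntersectionMatrix_real_and_bounded (d : ℕ) (hd : 5 ≤ d)
    (k : ℝ) (hk : 2 ≤ k) (mu : ℂ)
    (hmu : ((firstIntersectionMatrix d k).map (Complex.ofReal)).charpoly.IsRoot mu) :
    mu.im = 0 ∧ -2 ≤ mu.re ∧ mu.re ≤ k ∧ |mu.re - (k - 2) / 2| ≤ (k + 2) / 2 := by
  obtain ⟨e, rfl⟩ : ∃ e, d = e + 5 := ⟨d - 5, by omega⟩
  set M : Matrix (Fin (e+5+1)) (Fin (e+5+1)) ℂ :=
    (firstIntersectionMatrix (e+5) k).map (Complex.ofReal) with hMdef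
  have hdet : (mu • (1 : Matrix (Fin (e+5+1)) (Fin (e+5+1)) ℂ) - M).det = 0 := by
    have h1 : (Matrix.charmatrix M).map (Polynomial.evalRingHom mu) = mu • 1 - M := by
      ext i j
      by_cases h : i = j
      · subst h
        simp [Matrix.charmatrix_apply_eq, Matrix.one_apply_eq]
      · simp [Matrix.charmatrix_apply_ne _ _ _ h, Matrix.one_apply_ne h]
    have h2 := (RingHom.map_det (Polynomial.evalRingHom mu) (Matrix.charmatrix M)).symm
    rw [RingHom.mapMatrix_apply, h1] at h2
    rw [h2]
    simpa [Matrix.charpoly, Polynomial.IsRoot] using hmu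
  obtain ⟨v, hv0, hvz⟩ := (Matrix.exists_mulVec_eq_zero_iff).2 hdet
  have hmv : M.mulVec v = mu • v := by
    have := hvz
    rw [Matrix.sub_mulVec, Matrix.smul_mulVec, Matrix.one_mulVec, sub_eq_zero] at this
    exact this.symm
  have hrow : ∀ i : Fin (e+6), (∑ j : Fin (e+6), M i j * v j) = mu * v i := by
    intro i
    have := congrFun hmv i
    simpa [Matrix.mulVec, dotProduct] using this
  set a : ℕ → ℂ := fun m => if h : m < e+6 then v ⟨m, h⟩ else 0 with hadef
  have ha : ∀ (m : ℕ) (h : m < e+6), a m = v ⟨m, h⟩ := fun m h => dif_pos h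
  -- sums in nat form
  have hsum : ∀ (i : ℕ) (hi : i < e+6),
      (∑ m ∈ range (e+6), ((entryFun (e+5) k i m : ℝ) : ℂ) * a m) = mu * a i := by
    intro i hi
    rw [ha i hi, ← hrow ⟨i, hi⟩,
      ← Fin.sum_univ_eq_sum_range (fun m => ((entryFun (e+5) k i m : ℝ) : ℂ) * a m) (e+6)]
    refine Finset.sum_congr rfl fun j _ => ?_
    rw [ha (↑j) j.isLt, Fin.eta]
    rfl
  -- row 0
  have h0 : a 1 = mu * a 0 := by
    have h := hsum 0 (by omega)
    have hpt : ∀ m ∈ range (e+6),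
        ((entryFun (e+5) k 0 m : ℝ) : ℂ) * a m = if m = 1 then a m else 0 := by
      intro m _
      unfold entryFun
      split_ifs <;> first | omega | contradiction | (push_cast; ring)
    rw [Finset.sum_congr rfl hpt, Finset.sum_ite_eq' (range (e+6)) 1 (fun m => a m),
      if_pos (by simp only [Finset.mem_range]; omega)] at h
    exact h
  -- row 1
  have h1 : (k:ℂ) * a 0 + (3*(k:ℂ)-6)/4 * a 1 + ((k:ℂ)+2)/4 * a 2 = mu * a 1 := by
    have h := hsum 1 (by omega)
    have hpt : ∀ m ∈ range (e+6),
        ((entryFun (e+5) k 1 m : ℝ) : ℂ) * a m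
          = (if m = 0 then (k:ℂ) * a m else 0) + (if m = 1 then (3*(k:ℂ)-6)/4 * a m else 0)
            + (if m = 2 then ((k:ℂ)+2)/4 * a m else 0) := by
      intro m _
      unfold entryFun
      split_ifs <;> first | omega | contradiction | (push_cast; ring)
    rw [Finset.sum_congr rfl hpt, Finset.sum_add_distrib, Finset.sum_add_distrib,
      Finset.sum_ite_eq' (range (e+6)) 0 (fun m => (k:ℂ) * a m),
      Finset.sum_ite_eq' (range (e+6)) 1 (fun m => (3*(k:ℂ)-6)/4 * a m),
      Finset.sum_ite_eq' (range (e+6)) 2 (fun m => ((k:ℂ)+2)/4 * a m),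
      if_pos (by simp only [Finset.mem_range]; omega),
      if_pos (by simp only [Finset.mem_range]; omega),
      if_pos (by simp only [Finset.mem_range]; omega)] at h
    exact h
  -- middle rows
  have hmid : ∀ t, t ≤ e + 2 →
      ((k:ℂ)+2)/4 * a (t+1) + ((k:ℂ)-2)/2 * a (t+2) + ((k:ℂ)+2)/4 * a (t+3) = mu * a (t+2) := by
    intro t ht
    have h := hsum (t+2) (by omega)
    have hpt : ∀ m ∈ range (e+6),
        ((entryFun (e+5) k (t+2) m : ℝ) : ℂ) * a m
          = (if m = t+1 then ((k:ℂ)+2)/4 * a m else 0) + (if m = t+2 then ((k:ℂ)-2)/2 * a m else 0)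
            + (if m = t+3 then ((k:ℂ)+2)/4 * a m else 0) := by
      intro m _
      unfold entryFun
      split_ifs <;> first | omega | contradiction | (push_cast; ring)
    rw [Finset.sum_congr rfl hpt, Finset.sum_add_distrib, Finset.sum_add_distrib,
      Finset.sum_ite_eq' (range (e+6)) (t+1) (fun m => ((k:ℂ)+2)/4 * a m),
      Finset.sum_ite_eq' (range (e+6)) (t+2) (fun m => ((k:ℂ)-2)/2 * a m),
      Finset.sum_ite_eq' (range (e+6)) (t+3) (fun m => ((k:ℂ)+2)/4 * a m),
      if_pos (by simp only [Finset.mem_range]; omega),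
      if_pos (by simp only [Finset.mem_range]; omega),
      if_pos (by simp only [Finset.mem_range]; omega)] at h
    exact h
  -- last row
  have hd' : ((k:ℂ)+2)/4 * a (e+4) + (3*(k:ℂ)-2)/4 * a (e+5) = mu * a (e+5) := by
    have h := hsum (e+5) (by omega)
    have hpt : ∀ m ∈ range (e+6),
        ((entryFun (e+5) k (e+5) m : ℝ) : ℂ) * a m
          = (if m = e+4 then ((k:ℂ)+2)/4 * a m else 0)
            + (if m = e+5 then (3*(k:ℂ)-2)/4 * a m else 0) := by
      intro m _
      unfold entryFun
      split_ifs <;> first | omega | contradiction | (push_cast; ring)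
    rw [Finset.sum_congr rfl hpt, Finset.sum_add_distrib,
      Finset.sum_ite_eq' (range (e+6)) (e+4) (fun m => ((k:ℂ)+2)/4 * a m),
      Finset.sum_ite_eq' (range (e+6)) (e+5) (fun m => (3*(k:ℂ)-2)/4 * a m),
      if_pos (by simp only [Finset.mem_range]; omega),
      if_pos (by simp only [Finset.mem_range]; omega)] at h
    exact h
  -- sum splitting for the weighted norm
  have hsplit : ∑ t ∈ range (e+5), conj (a (t+1)) * a (t+1)
      = conj (a 1) * a 1 + (∑ t ∈ range (e+3), conj (a (t+2)) * a (t+2))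
        + conj (a (e+5)) * a (e+5) := by
    rw [show e+5 = (e+4)+1 by omega, Finset.sum_range_succ, show e+4 = (e+3)+1 by omega,
      Finset.sum_range_succ']
    have hss : ∀ i ∈ range (e+3), conj (a (i+1+1)) * a (i+1+1) = conj (a (i+2)) * a (i+2) := by
      intro i _; rw [show i+1+1 = i+2 by omega]
    rw [Finset.sum_congr rfl hss, show e+3+1+1 = e+5 by omega, show (0:ℕ)+1 = 1 by omega]
    ring
  have hmids : ∑ t ∈ range (e+3), conj (a (t+2)) *
        (((k:ℂ)+2)/4 * a (t+1) + ((k:ℂ)-2)/2 * a (t+2) + ((k:ℂ)+2)/4 * a (t+3))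
      = mu * ∑ t ∈ range (e+3), conj (a (t+2)) * a (t+2) := by
    rw [Finset.mul_sum]
    refine Finset.sum_congr rfl fun t ht => ?_
    rw [hmid t (by simp only [Finset.mem_range] at ht; omega)]
    ring
  have hS : (k:ℂ) * conj (a 0) * a 1
      + conj (a 1) * ((k:ℂ) * a 0 + (3*(k:ℂ)-6)/4 * a 1 + ((k:ℂ)+2)/4 * a 2)
      + (∑ t ∈ range (e+3), conj (a (t+2)) *
          (((k:ℂ)+2)/4 * a (t+1) + ((k:ℂ)-2)/2 * a (t+2) + ((k:ℂ)+2)/4 * a (t+3)))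
      + conj (a (e+5)) * (((k:ℂ)+2)/4 * a (e+4) + (3*(k:ℂ)-2)/4 * a (e+5))
      = mu * ((k:ℂ) * (conj (a 0) * a 0) + ∑ t ∈ range (e+5), conj (a (t+1)) * a (t+1)) := by
    linear_combination ((k:ℂ) * conj (a 0)) * h0 + conj (a 1) * h1 + hmids
      + conj (a (e+5)) * hd' - mu * hsplit
  -- real quantities
  set n : ℝ := k * Complex.normSq (a 0) + ∑ t ∈ range (e+5), Complex.normSq (a (t+1)) with hndef
  set r1 : ℝ := Complex.normSq ((k:ℂ) * a 0 - a 1)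
      + (k+2)/4 * ∑ t ∈ range (e+4), Complex.normSq (a (t+1) - a (t+2)) with hr1def
  set r2 : ℝ := 2*k*Complex.normSq (a 0 + a 1 / 2)
      + (k+2)/4 * ∑ t ∈ range (e+4), Complex.normSq (a (t+1) + a (t+2))
      + (k+2)/2 * Complex.normSq (a (e+5)) with hr2def
  have hcs : ∀ z : ℂ, conj z * z = (Complex.normSq z : ℂ) := fun z => by
    rw [mul_comm, Complex.mul_conj]
  have hNn : (k:ℂ) * (conj (a 0) * a 0) + ∑ t ∈ range (e+5), conj (a (t+1)) * a (t+1)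
      = ((n:ℝ) : ℂ) := by
    rw [hndef]; simp only [hcs]; push_cast; ring
  have hr1c : conj ((k:ℂ) * a 0 - a 1) * ((k:ℂ) * a 0 - a 1)
      + ((k:ℂ)+2)/4 * ∑ t ∈ range (e+4), conj (a (t+1) - a (t+2)) * (a (t+1) - a (t+2))
      = ((r1:ℝ) : ℂ) := by
    rw [hr1def]; simp only [hcs]; push_cast; ring
  have hr2c : 2 * (k:ℂ) * (conj (a 0 + a 1 / 2) * (a 0 + a 1 / 2))
      + ((k:ℂ)+2)/4 * ∑ t ∈ range (e+4), conj (a (t+1) + a (t+2)) * (a (t+1) + a (t+2))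
      + ((k:ℂ)+2)/2 * (conj (a (e+5)) * a (e+5)) = ((r2:ℝ) : ℂ) := by
    rw [hr2def]; simp only [hcs]; push_cast; ring
  have hIn : ((k:ℂ) - mu) * ((n:ℝ) : ℂ) = ((r1:ℝ) : ℂ) := by
    linear_combination keyI k e a + hS + hr1c + (mu - (k:ℂ)) * hNn
  have hIIn : (mu + 2) * ((n:ℝ) : ℂ) = ((r2:ℝ) : ℂ) := by
    linear_combination keyII k e a - hS + hr2c - (mu + 2) * hNn
  -- positivity
  have hnn : ∀ m, 0 ≤ Complex.normSq (a m) := fun m => Complex.normSq_nonneg _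
  have hsumnn : 0 ≤ ∑ t ∈ range (e+5), Complex.normSq (a (t+1)) :=
    Finset.sum_nonneg fun t _ => hnn _
  have hr1nn : 0 ≤ r1 := by
    rw [hr1def]
    have h1 := Finset.sum_nonneg
      (fun t (_ : t ∈ range (e+4)) => Complex.normSq_nonneg (a (t+1) - a (t+2)))
    have h2 := Complex.normSq_nonneg ((k:ℂ) * a 0 - a 1)
    nlinarith
  have hr2nn : 0 ≤ r2 := by
    rw [hr2def]
    have h1 := Finset.sum_nonneg
      (fun t (_ : t ∈ range (e+4)) => Complex.normSq_nonneg (a (t+1) + a (t+2)))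
    have h2 := Complex.normSq_nonneg (a 0 + a 1 / 2)
    have h3 := Complex.normSq_nonneg (a (e+5))
    nlinarith
  have hnpos : 0 < n := by
    obtain ⟨i, hvi⟩ := Function.ne_iff.mp hv0
    have hai : a ↑i ≠ 0 := by rw [ha ↑i i.isLt, Fin.eta]; exact hvi
    rw [hndef]
    rcases Nat.eq_zero_or_pos ↑i with h | h
    · have hp : 0 < Complex.normSq (a 0) := Complex.normSq_pos.mpr (h ▸ hai)
      nlinarith
    · obtain ⟨m, hm⟩ : ∃ m, (i:ℕ) = m + 1 := ⟨(i:ℕ)-1, by omega⟩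
      have hmlt : m ∈ range (e+5) := by
        simp only [Finset.mem_range]; have := i.isLt; omega
      have hpos : 0 < Complex.normSq (a (m+1)) := Complex.normSq_pos.mpr (hm ▸ hai)
      have hge' : Complex.normSq (a (m+1)) ≤ ∑ t ∈ range (e+5), Complex.normSq (a (t+1)) :=
        Finset.single_le_sum (f := fun t => Complex.normSq (a (t+1))) (fun t _ => hnn _) hmlt
      nlinarith [mul_nonneg (by linarith : (0:ℝ) ≤ k) (hnn 0)]
  -- extract real and imaginary parts
  have hIm : mu.im = 0 := by
    have h := congrArg Complex.im hIn
    simp only [Complex.mul_im, Complex.sub_im, Complex.sub_re, Complex.ofReal_im,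
      Complex.ofReal_re, mul_zero, zero_mul, add_zero, zero_add, zero_sub, neg_mul] at h
    rcases mul_eq_zero.mp (by linarith : mu.im * n = 0) with h' | h'
    · exact h'
    · exact absurd h' (by linarith)
  have hRe1 : (k - mu.re) * n = r1 := by
    have h := congrArg Complex.re hIn
    simp only [Complex.mul_re, Complex.sub_im, Complex.sub_re, Complex.ofReal_im,
      Complex.ofReal_re, mul_zero, zero_mul, add_zero, zero_add, sub_zero, zero_sub] at h
    linarith [h]
  have hRe2 : (mu.re + 2) * n = r2 := by
    have h := congrArg Complex.re hIIn
    simp only [Complex.mul_re, Complex.add_im, Complex.add_re, Complex.ofReal_im,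
      Complex.ofReal_re, Complex.re_ofNat, Complex.im_ofNat, mul_zero, zero_mul,
      add_zero, zero_add, sub_zero] at h
    linarith [h]
  have hle : mu.re ≤ k := by nlinarith
  have hge : -2 ≤ mu.re := by nlinarith
  refine ⟨hIm, hge, hle, ?_⟩
  rw [abs_le]
  constructor <;> linarith
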